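/- Let Ω be a nonempty set, let K be a field, and let ℓ ≥ 1 be an integer. Let β : Ω → K be a function and let F be a K-linear subspace of the space of all functions Ω → K with dim_K F = ℓ + 1. Assume that for every linear subspace V ⊆ F with dim_K V = ℓ there exist an integer r ≥ 1 and functions f₁, …, f_r ∈ V such that β(x) = f₁(x)² + ⋯ + f_r(x)² for all x ∈ Ω. Then β is identically zero. -/

import Mathlib

open Module

lemma aux_exists_submodule {K M : Type*} [Field K] [AddCommGroup M] [Module K M]
    [FiniteDimensional K M] {n : ℕ} (hn : n ≤ finrank K M) :
    ∃ W : Submodule K M, finrank K W = n := by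
  classical
  let b := Module.finBasis K M
  refine ⟨Submodule.span K (Set.range (b ∘ Fin.castLE hn)), ?_⟩
  rw [finrank_span_eq_card (b.linearIndependent.comp _ (Fin.castLE_injective hn))]
  simp

set_option synthInstance.maxHeartbeats 1000000 in
theorem stmt0 {Ω K : Type*} [Nonempty Ω] [Field K] (ℓ : ℕ) (hℓ : 1 ≤ ℓ)
    (β : Ω → K) (F : Submodule K (Ω → K))
    (hF : Module.finrank K F = ℓ + 1)
    (h : ∀ V : Submodule K (Ω → K), V ≤ F → Module.finrank K V = ℓ →
      ∃ (r : ℕ) (f : Fin r → Ω → K), 1 ≤ r ∧ (∀ i, f i ∈ V) ∧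
        ∀ x : Ω, β x = ∑ i, (f i x) ^ 2) :
    β = 0 := by
  haveI : FiniteDimensional K F := FiniteDimensional.of_finrank_pos (by omega)
  funext x
  -- evaluation at x restricted to F
  let φ : F →ₗ[K] K := (LinearMap.proj x).comp F.subtype
  have hker : ℓ ≤ finrank K (LinearMap.ker φ) := by
    have h1 := LinearMap.finrank_range_add_finrank_ker φ
    have h2 : finrank K (LinearMap.range φ) ≤ 1 := by
      simpa using (LinearMap.range φ).finrank_le
    omega
  obtain ⟨W, hW⟩ := aux_exists_submodule (M := LinearMap.ker φ) hker
  let ι : (LinearMap.ker φ) →ₗ[K] (Ω → K) := F.subtype.comp (LinearMap.ker φ).subtype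
  have hinj : Function.Injective ι :=
    Subtype.val_injective.comp Subtype.val_injective
  have hle : W.map ι ≤ F := by
    rintro v ⟨w, _, rfl⟩
    exact (w : F).2
  have hrk : Module.finrank K (W.map ι) = ℓ := by
    rw [show W.map ι = (W.map (LinearMap.ker φ).subtype).map F.subtype from
      Submodule.map_comp _ _ W, Submodule.finrank_map_subtype_eq,
      Submodule.finrank_map_subtype_eq, hW]
  obtain ⟨r, f, hr, hfV, hsum⟩ := h (W.map ι) hle hrk
  rw [hsum x, Pi.zero_apply]
  refine Finset.sum_eq_zero fun i _ => ?_
  obtain ⟨w, _, hfw⟩ := hfV i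
  have : f i x = 0 := by
    rw [← hfw]
    exact w.2
  rw [this]; ring
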